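/- Let (X_t)_{t≥1} be a strictly stationary, temperately dependent sequence of real random variables satisfying the Glivenko–Cantelli property, whose common cdf F and quantile function F^{-1} are both continuous, and let [a, b] be any finite subinterval of [a_X, b_X]. Define Z_{0,n} := a, Z_{n+1,n} := b, and for t = 1, …, n, Z_{t,n} := min(max(X_{t:n}, a), b) (the clamp of the t-th order statistic to [a, b]). Then max_{1≤t≤n+1} (Z_{t,n} − Z_{t-1,n}) → 0 in probability as n → ∞. -/

import Mathlib

open MeasureTheory ProbabilityTheory Filter
open scoped Classical

/-- The `t`-th order statistic (1-based) of `X 1, …, X n`. -/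
noncomputable def orderStat {Ω : Type*} (X : ℕ → Ω → ℝ) (n t : ℕ) (ω : Ω) : ℝ :=
  (List.insertionSort (· ≤ ·) ((List.range n).map fun s => X (s + 1) ω)).getD (t - 1) 0

/-- The maximum of `X 1, …, X n`. -/
noncomputable def rmax {Ω : Type*} (X : ℕ → Ω → ℝ) (n : ℕ) (ω : Ω) : ℝ :=
  (Finset.Icc 1 (max n 1)).sup' (Finset.nonempty_Icc.mpr (le_max_right n 1)) fun t => X t ω

/-- The minimum of `X 1, …, X n`. -/
noncomputable def rmin {Ω : Type*} (X : ℕ → Ω → ℝ) (n : ℕ) (ω : Ω) : ℝ :=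
  (Finset.Icc 1 (max n 1)).inf' (Finset.nonempty_Icc.mpr (le_max_right n 1)) fun t => X t ω

/-- The cumulative distribution function of a random variable `X` under `P`. -/
noncomputable def cdfOf {Ω : Type*} [MeasurableSpace Ω] (P : Measure Ω) (X : Ω → ℝ) : ℝ → ℝ :=
  fun x => (P {ω | X ω ≤ x}).toReal

/-- Lower endpoint `a_X = sup {x : F x = 0}` of the support of a cdf `F`. -/
noncomputable def lowerEnd (F : ℝ → ℝ) : EReal :=
  sSup ((fun x : ℝ => (x : EReal)) '' {x | F x = 0})

/-- Upper endpoint `b_X = inf {x : F x = 1}` of the support of a cdf `F`. -/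
noncomputable def upperEnd (F : ℝ → ℝ) : EReal :=
  sInf ((fun x : ℝ => (x : EReal)) '' {x | F x = 1})

/-- Strict stationarity of the sequence `X 1, X 2, …`. -/
def StrictlyStationary {Ω : Type*} [MeasurableSpace Ω] (P : Measure Ω)
    (X : ℕ → Ω → ℝ) : Prop :=
  ∀ (k t : ℕ),
    Measure.map (fun ω => fun i : Fin k => X (1 + t + (i : ℕ)) ω) P =
      Measure.map (fun ω => fun i : Fin k => X (1 + (i : ℕ)) ω) P

/-- Temperate dependence with respect to the cdf `F`. -/
def TemperatelyDependent {Ω : Type*} [MeasurableSpace Ω] (P : Measure Ω)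
    (X : ℕ → Ω → ℝ) (F : ℝ → ℝ) : Prop :=
  ∀ x : ℝ, lowerEnd F < (x : EReal) → (x : EReal) < upperEnd F →
    Tendsto (fun n => P {ω | x ≤ rmin X n ω}) atTop (nhds 0) ∧
    Tendsto (fun n => P {ω | rmax X n ω ≤ x}) atTop (nhds 0)

/-- The empirical cdf of the sample `X 1, …, X n`. -/
noncomputable def empCDF {Ω : Type*} (X : ℕ → Ω → ℝ) (n : ℕ) (ω : Ω) (x : ℝ) : ℝ :=
  (n : ℝ)⁻¹ * ∑ t ∈ Finset.Icc 1 n, if X t ω ≤ x then (1 : ℝ) else 0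

/-- The (weak) Glivenko–Cantelli property: `sup_x |F_n x - F x| → 0` in probability. -/
def GlivenkoCantelliProp {Ω : Type*} [MeasurableSpace Ω] (P : Measure Ω)
    (X : ℕ → Ω → ℝ) (F : ℝ → ℝ) : Prop :=
  ∀ ε : ℝ, 0 < ε →
    Tendsto (fun n => P {ω | ε ≤ ⨆ x : ℝ, |empCDF X n ω x - F x|}) atTop (nhds 0)

/-- The quantile function `F⁻¹ t = inf {x : F x ≥ t}`. -/
noncomputable def quantile (F : ℝ → ℝ) (t : ℝ) : ℝ := sInf {x | t ≤ F x}

/-- Convergence in probability of `Z n` to the constant `c`. -/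
def TendstoInProb {Ω : Type*} [MeasurableSpace Ω] (P : Measure Ω)
    (Z : ℕ → Ω → ℝ) (c : ℝ) : Prop :=
  ∀ ε : ℝ, 0 < ε → Tendsto (fun n => P {ω | ε ≤ |Z n ω - c|}) atTop (nhds 0)

/-- `Z_{t,n}`: the order statistics clamped to `[a, b]`, with the conventions
`Z_{0,n} = a` and `Z_{n+1,n} = b`. -/
noncomputable def clampOS {Ω : Type*} (X : ℕ → Ω → ℝ) (a b : ℝ) (n t : ℕ) (ω : Ω) : ℝ :=
  if t = 0 then a else if t = n + 1 then b else min (max (orderStat X n t ω) a) b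

/-! ### Auxiliary lemmas -/

lemma cdfOf_eq_cdf {Ω : Type*} [MeasurableSpace Ω] (P : Measure Ω) [IsProbabilityMeasure P]
    {X : Ω → ℝ} (hX : Measurable X) :
    cdfOf P X = ProbabilityTheory.cdf (P.map X) := by
  have : IsProbabilityMeasure (P.map X) := Measure.isProbabilityMeasure_map hX.aemeasurable
  funext x
  rw [ProbabilityTheory.cdf_eq_real, Measure.real, cdfOf, Measure.map_apply hX measurableSet_Iic]
  rfl

lemma strictMonoOn_aux {F : ℝ → ℝ} (hmono : Monotone F)
    (h0 : Tendsto F atBot (nhds 0)) (h1 : Tendsto F atTop (nhds 1))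
    (hq : ContinuousOn (quantile F) (Set.Ioo 0 1))
    {a b : ℝ} (ha : lowerEnd F ≤ (a : EReal)) (hb : (b : EReal) ≤ upperEnd F)
    {x y : ℝ} (hax : a ≤ x) (hxy : x < y) (hyb : y ≤ b) : F x < F y := by
  rcases lt_or_eq_of_le (hmono hxy.le) with h | h
  · exact h
  exfalso
  have hp0 : 0 ≤ F x := le_of_tendsto h0 (eventually_atBot.2 ⟨x, fun z hz => hmono hz⟩)
  have hp1 : F x ≤ 1 := ge_of_tendsto h1 (eventually_atTop.2 ⟨x, fun z hz => hmono hz⟩)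
  rcases eq_or_lt_of_le hp0 with hp0' | hp0'
  · have hy0 : F y = 0 := by rw [← h, ← hp0']
    have h2 : (y : EReal) ≤ lowerEnd F := le_sSup ⟨y, hy0, rfl⟩
    have h3 : (y : EReal) ≤ (a : EReal) := h2.trans ha
    have : y ≤ a := by exact_mod_cast h3
    linarith
  rcases eq_or_lt_of_le hp1 with hp1' | hp1'
  · have h2 : upperEnd F ≤ (x : EReal) := sInf_le ⟨x, show F x = 1 from hp1', rfl⟩
    have h3 : (b : EReal) ≤ (x : EReal) := hb.trans h2
    have : b ≤ x := by exact_mod_cast h3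
    linarith
  -- 0 < F x < 1
  have hqx : quantile F (F x) ≤ x := by
    obtain ⟨w, hw⟩ : ∃ w, F w < F x := (h0.eventually_lt_const hp0').exists
    refine csInf_le ⟨w, fun z hz => ?_⟩ (show F x ≤ F x from le_rfl)
    by_contra hzw
    push_neg at hzw
    exact absurd (hz.trans (hmono hzw.le)) (not_le.2 hw)
  have hqy : ∀ q ∈ Set.Ioo (F x) 1, y ≤ quantile F q := by
    intro q hq'
    obtain ⟨z, hz⟩ : ∃ z, q ≤ F z := (h1.eventually_const_lt hq'.2).exists.imp
      fun z hz => hz.le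
    refine le_csInf ⟨z, hz⟩ fun w hw => ?_
    by_contra hwy
    push_neg at hwy
    have : F w ≤ F x := h ▸ hmono hwy.le
    exact absurd (hw.trans this) (not_le.2 hq'.1)
  haveI := left_nhdsWithin_Ioo_neBot hp1'
  have hkey : Tendsto (quantile F) (nhdsWithin (F x) (Set.Ioo (F x) 1))
      (nhds (quantile F (F x))) :=
    (hq (F x) ⟨hp0', hp1'⟩).mono_left
      (nhdsWithin_mono _ (Set.Ioo_subset_Ioo hp0'.le le_rfl))
  have : y ≤ quantile F (F x) :=
    ge_of_tendsto hkey (eventually_nhdsWithin_of_forall hqy)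
  linarith

lemma clampOS_mem {Ω : Type*} (X : ℕ → Ω → ℝ) {a b : ℝ} (hab : a ≤ b) (n t : ℕ) (ω : Ω) :
    a ≤ clampOS X a b n t ω ∧ clampOS X a b n t ω ≤ b := by
  unfold clampOS
  split_ifs with h1 h2
  · exact ⟨le_rfl, hab⟩
  · exact ⟨hab, le_rfl⟩
  · exact ⟨le_min (le_max_right _ _) hab, min_le_right _ _⟩

lemma orderStat_mono {Ω : Type*} (X : ℕ → Ω → ℝ) {n u v : ℕ} (hu : 1 ≤ u) (huv : u ≤ v)
    (hv : v ≤ n) (ω : Ω) : orderStat X n u ω ≤ orderStat X n v ω := by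
  unfold orderStat
  set S := List.insertionSort (· ≤ ·) ((List.range n).map fun s => X (s + 1) ω) with hS
  have hlen : S.length = n := by simp [hS]
  have hu' : u - 1 < S.length := by omega
  have hv' : v - 1 < S.length := by omega
  rw [List.getD_eq_get _ _ ⟨u - 1, hu'⟩, List.getD_eq_get _ _ ⟨v - 1, hv'⟩]
  exact (List.pairwise_insertionSort _ _).rel_get_of_le (by simp [Fin.le_def]; omega)

lemma gapSup_nonneg {Ω : Type*} (X : ℕ → Ω → ℝ) {a b : ℝ} (hab : a ≤ b) (n : ℕ) (ω : Ω) :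
    (0:ℝ) ≤ (Finset.Icc 1 (n + 1)).sup' (Finset.nonempty_Icc.mpr (Nat.le_add_left 1 n))
      (fun t => clampOS X a b n t ω - clampOS X a b n (t - 1) ω) := by
  refine Finset.le_sup'_of_le _ (b := n + 1) (by simp) ?_
  have h1 : clampOS X a b n (n+1) ω = b := by simp [clampOS]
  have h2 := (clampOS_mem X hab n (n + 1 - 1) ω).2
  simp only [h1]
  linarith

lemma key_pointwise {Ω : Type*} (X : ℕ → Ω → ℝ) {a b ε : ℝ} (hab : a ≤ b) (hε : 0 < ε)
    (n : ℕ) (ω : Ω)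
    (h : ε ≤ |(Finset.Icc 1 (n + 1)).sup' (Finset.nonempty_Icc.mpr (Nat.le_add_left 1 n))
        (fun t => clampOS X a b n t ω - clampOS X a b n (t - 1) ω) - 0|) :
    ∃ c, c ∈ Set.Icc a (b - ε) ∧ ∀ s, 1 ≤ s → s ≤ n → X s ω ∉ Set.Ioo c (c + ε) := by
  have hbd := fun t => clampOS_mem X hab n t ω
  rw [sub_zero, abs_of_nonneg (gapSup_nonneg X hab n ω)] at h
  obtain ⟨t, ht, hgap⟩ := (Finset.le_sup'_iff _).1 h
  rw [Finset.mem_Icc] at ht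
  set c := clampOS X a b n (t - 1) ω with hc
  set d := clampOS X a b n t ω with hd
  have hac : a ≤ c := (hbd _).1
  have hdb : d ≤ b := (hbd _).2
  refine ⟨c, ⟨hac, by linarith⟩, ?_⟩
  rintro s hs1 hsn ⟨hcx, hxc⟩
  set x := X s ω with hx
  have hxd : x < d := by linarith
  set S := List.insertionSort (· ≤ ·) ((List.range n).map fun s' => X (s' + 1) ω) with hS
  have hlen : S.length = n := by simp [hS]
  have hmemS : x ∈ S := by
    rw [hS, List.mem_insertionSort, List.mem_map]
    exact ⟨s - 1, List.mem_range.2 (by omega), by rw [Nat.sub_add_cancel hs1]⟩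
  obtain ⟨j, hj⟩ := List.mem_iff_get.1 hmemS
  have hjn : (j : ℕ) < n := hlen ▸ j.2
  have hOSx : orderStat X n ((j : ℕ) + 1) ω = x := by
    unfold orderStat
    rw [← hS, Nat.add_sub_cancel, List.getD_eq_get _ _ ⟨j, (by omega : (j:ℕ) < S.length)⟩]
    simpa using hj
  have hclampx : min (max x a) b = x := by
    rw [max_eq_left (by linarith), min_eq_left (by linarith)]
  rcases le_or_gt ((j : ℕ) + 1) (t - 1) with hle | hlt
  · have ht1 : t - 1 ≠ 0 := by omega
    have ht2 : t - 1 ≠ n + 1 := by omega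
    have hcval : c = min (max (orderStat X n (t-1) ω) a) b := by
      rw [hc]; simp [clampOS, ht1, ht2]
    have hvn : t - 1 ≤ n := by omega
    have hmono := orderStat_mono X (by omega : 1 ≤ (j:ℕ)+1) hle hvn ω
    have : x ≤ c := by
      rw [hcval, ← hclampx, ← hOSx]
      exact min_le_min (max_le_max hmono le_rfl) le_rfl
    linarith
  · have htu : t ≤ (j : ℕ) + 1 := by omega
    have ht1 : t ≠ 0 := by omega
    have ht2 : t ≠ n + 1 := by omega
    have hdval : d = min (max (orderStat X n t ω) a) b := by
      rw [hd]; simp [clampOS, ht1, ht2]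
    have hvn : (j:ℕ) + 1 ≤ n := by omega
    have hmono := orderStat_mono X (by omega : 1 ≤ t) htu hvn ω
    have : d ≤ x := by
      rw [hdval, ← hclampx, ← hOSx]
      exact min_le_min (max_le_max hmono le_rfl) le_rfl
    linarith

lemma empCDF_nonneg {Ω : Type*} (X : ℕ → Ω → ℝ) (n : ℕ) (ω : Ω) (x : ℝ) :
    0 ≤ empCDF X n ω x := by
  unfold empCDF
  refine mul_nonneg (by positivity) (Finset.sum_nonneg fun t _ => ?_)
  split_ifs <;> norm_num

lemma empCDF_le_one {Ω : Type*} (X : ℕ → Ω → ℝ) (n : ℕ) (ω : Ω) (x : ℝ) :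
    empCDF X n ω x ≤ 1 := by
  unfold empCDF
  have hsum : (∑ t ∈ Finset.Icc 1 n, if X t ω ≤ x then (1:ℝ) else 0) ≤ n := by
    calc (∑ t ∈ Finset.Icc 1 n, if X t ω ≤ x then (1:ℝ) else 0)
        ≤ ∑ t ∈ Finset.Icc 1 n, 1 := Finset.sum_le_sum fun t _ => by split_ifs <;> norm_num
      _ = n := by simp
  rcases Nat.eq_zero_or_pos n with rfl | hn
  · simp
  · rw [inv_mul_le_iff₀ (by positivity)]
    simpa using hsum

lemma empCDF_anti_of_gap {Ω : Type*} (X : ℕ → Ω → ℝ) (n : ℕ) (ω : Ω) {c' d' : ℝ}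
    (hno : ∀ s, 1 ≤ s → s ≤ n → ¬ (c' < X s ω ∧ X s ω ≤ d')) :
    empCDF X n ω d' ≤ empCDF X n ω c' := by
  unfold empCDF
  refine mul_le_mul_of_nonneg_left (Finset.sum_le_sum fun t ht => ?_) (by positivity)
  rw [Finset.mem_Icc] at ht
  by_cases hxd : X t ω ≤ d'
  · have hxc : X t ω ≤ c' := by
      by_contra hcx
      exact hno t ht.1 ht.2 ⟨not_le.1 hcx, hxd⟩
    simp [hxd, hxc]
  · simp only [if_neg hxd]
    split_ifs <;> norm_num

lemma half_le_sup_abs {Ω : Type*} {F : ℝ → ℝ} (hF0 : ∀ x, 0 ≤ F x) (hF1 : ∀ x, F x ≤ 1)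
    (X : ℕ → Ω → ℝ) (n : ℕ) (ω : Ω) {c' d' δ : ℝ} (hδ : δ ≤ F d' - F c')
    (hemp : empCDF X n ω d' ≤ empCDF X n ω c') :
    δ / 2 ≤ ⨆ x : ℝ, |empCDF X n ω x - F x| := by
  have hbdd : BddAbove (Set.range fun x => |empCDF X n ω x - F x|) := by
    refine ⟨1, fun y hy => ?_⟩
    obtain ⟨x, rfl⟩ := hy
    rw [abs_le]
    constructor <;>
      [linarith [empCDF_nonneg X n ω x, hF1 x]; linarith [empCDF_le_one X n ω x, hF0 x]]
  have h1 := le_ciSup hbdd c'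
  have h2 := le_ciSup hbdd d'
  have h3 : empCDF X n ω c' - F c' ≤ |empCDF X n ω c' - F c'| := le_abs_self _
  have h4 : F d' - empCDF X n ω d' ≤ |empCDF X n ω d' - F d'| := by
    rw [abs_sub_comm]; exact le_abs_self _
  linarith

theorem stmt_8 {Ω : Type*} [MeasurableSpace Ω] (P : Measure Ω) [IsProbabilityMeasure P]
    (X : ℕ → Ω → ℝ) (hmeas : ∀ t, Measurable (X t))
    (hss : StrictlyStationary P X)
    (htd : TemperatelyDependent P X (cdfOf P (X 1)))
    (hgc : GlivenkoCantelliProp P X (cdfOf P (X 1)))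
    (hcont : Continuous (cdfOf P (X 1)))
    (hqcont : ContinuousOn (quantile (cdfOf P (X 1))) (Set.Ioo 0 1))
    (a b : ℝ) (hab : a ≤ b)
    (ha : lowerEnd (cdfOf P (X 1)) ≤ (a : EReal)) (hb : (b : EReal) ≤ upperEnd (cdfOf P (X 1))) :
    TendstoInProb P
      (fun n ω => (Finset.Icc 1 (n + 1)).sup' (Finset.nonempty_Icc.mpr (Nat.le_add_left 1 n))
        (fun t => clampOS X a b n t ω - clampOS X a b n (t - 1) ω)) 0 := by
  intro ε hε
  set F := cdfOf P (X 1) with hF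
  have hFeq : F = ProbabilityTheory.cdf (P.map (X 1)) := cdfOf_eq_cdf P (hmeas 1)
  haveI : IsProbabilityMeasure (P.map (X 1)) := Measure.isProbabilityMeasure_map (hmeas 1).aemeasurable
  have hFmono : Monotone F := by rw [hFeq]; exact ProbabilityTheory.monotone_cdf _
  have hFbot : Tendsto F atBot (nhds 0) := by rw [hFeq]; exact ProbabilityTheory.tendsto_cdf_atBot _
  have hFtop : Tendsto F atTop (nhds 1) := by rw [hFeq]; exact ProbabilityTheory.tendsto_cdf_atTop _
  have hF0 : ∀ x, 0 ≤ F x := by rw [hFeq]; exact fun x => ProbabilityTheory.cdf_nonneg _ x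
  have hF1 : ∀ x, F x ≤ 1 := by rw [hFeq]; exact fun x => ProbabilityTheory.cdf_le_one _ x
  by_cases hba : ε ≤ b - a
  · -- main case
    have hne : a ≤ b - ε := by linarith
    set g : ℝ → ℝ := fun c => F (c + 2*ε/3) - F (c + ε/3) with hg
    have hgcont : Continuous g :=
      (hcont.comp (continuous_add_right _)).sub (hcont.comp (continuous_add_right _))
    obtain ⟨c₀, hc₀, hmin'⟩ := isCompact_Icc.exists_isMinOn (Set.nonempty_Icc.2 hne)
      hgcont.continuousOn
    have hmin : ∀ c ∈ Set.Icc a (b - ε), g c₀ ≤ g c := fun c hc => hmin' hc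
    have hδpos : 0 < g c₀ := by
      have h1 : a ≤ c₀ + ε/3 := by have := hc₀.1; linarith
      have h2 : c₀ + ε/3 < c₀ + 2*ε/3 := by linarith
      have h3 : c₀ + 2*ε/3 ≤ b := by have := hc₀.2; linarith
      exact sub_pos.2 (strictMonoOn_aux hFmono hFbot hFtop hqcont ha hb h1 h2 h3)
    have hincl : ∀ n : ℕ,
        {ω | ε ≤ |(Finset.Icc 1 (n + 1)).sup' (Finset.nonempty_Icc.mpr (Nat.le_add_left 1 n))
          (fun t => clampOS X a b n t ω - clampOS X a b n (t - 1) ω) - 0|} ⊆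
        {ω | g c₀ / 2 ≤ ⨆ x : ℝ, |empCDF X n ω x - F x|} := by
      intro n ω hω
      obtain ⟨c, hc, hno⟩ := key_pointwise X hab hε n ω hω
      have hδle : g c₀ ≤ F (c + 2*ε/3) - F (c + ε/3) := hmin c hc
      refine half_le_sup_abs hF0 hF1 X n ω hδle (empCDF_anti_of_gap X n ω ?_)
      rintro s hs1 hsn ⟨hlt, hle⟩
      exact hno s hs1 hsn ⟨by linarith, by linarith⟩
    exact tendsto_of_tendsto_of_tendsto_of_le_of_le tendsto_const_nhds
      (hgc (g c₀ / 2) (by positivity)) (fun n => zero_le)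
      (fun n => measure_mono (hincl n))
  · -- the event is empty
    refine tendsto_of_tendsto_of_tendsto_of_le_of_le tendsto_const_nhds
      (tendsto_const_nhds (x := (0 : ENNReal))) (fun n => zero_le) (fun n => ?_)
    have hempty : {ω | ε ≤ |(Finset.Icc 1 (n + 1)).sup'
        (Finset.nonempty_Icc.mpr (Nat.le_add_left 1 n))
        (fun t => clampOS X a b n t ω - clampOS X a b n (t - 1) ω) - 0|} = (∅ : Set Ω) := by
      ext ω
      simp only [Set.mem_setOf_eq, Set.mem_empty_iff_false, iff_false, not_le]
      have hbd := fun t => clampOS_mem X hab n t ω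
      have hub : (Finset.Icc 1 (n + 1)).sup' (Finset.nonempty_Icc.mpr (Nat.le_add_left 1 n))
          (fun t => clampOS X a b n t ω - clampOS X a b n (t - 1) ω) ≤ b - a := by
        refine Finset.sup'_le _ _ fun t _ => ?_
        have h1 := (hbd t).2
        have h2 := (hbd (t-1)).1
        linarith
      rw [sub_zero, abs_of_nonneg (gapSup_nonneg X hab n ω)]
      exact lt_of_le_of_lt hub (not_le.1 hba)
    exact le_of_eq (by rw [hempty, measure_empty])
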